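/- The homogeneous norm $\rho(z,t) = (|z|^4 + t^2)^{1/4}$ on the Heisenberg group $\mathbb{H}^n$ satisfies the triangle inequality with respect to the group law: $\rho(x \cdot y) \le \rho(x) + \rho(y)$ for all $x, y \in \mathbb{H}^n$. -/

import Mathlib

/-- The Heisenberg group `ℍⁿ = ℂⁿ × ℝ` with group law
`(z,t)·(w,s) = (z+w, t+s+2 Im⟨z,w⟩)`, `⟨z,w⟩ = ∑ zⱼ w̄ⱼ`. -/
noncomputable def heisenbergMul {n : ℕ} (x y : (Fin n → ℂ) × ℝ) : (Fin n → ℂ) × ℝ :=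
  (x.1 + y.1, x.2 + y.2 + 2 * (∑ j, x.1 j * (starRingEnd ℂ) (y.1 j)).im)

/-- The homogeneous norm `ρ(z,t) = (|z|⁴ + t²)^{1/4}`. -/
noncomputable def heisenbergNorm {n : ℕ} (x : (Fin n → ℂ) × ℝ) : ℝ :=
  ((∑ j, Complex.normSq (x.1 j)) ^ 2 + x.2 ^ 2) ^ ((1 : ℝ) / 4)

lemma hnorm_nonneg {n : ℕ} (x : (Fin n → ℂ) × ℝ) : 0 ≤ heisenbergNorm x :=
  Real.rpow_nonneg (by positivity) _

lemma hnorm_sq {n : ℕ} (x : (Fin n → ℂ) × ℝ) :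
    heisenbergNorm x ^ 2 = Real.sqrt ((∑ j, Complex.normSq (x.1 j)) ^ 2 + x.2 ^ 2) := by
  unfold heisenbergNorm
  rw [Real.sqrt_eq_rpow, ← Real.rpow_natCast (_ ^ ((1:ℝ)/4)) 2,
    ← Real.rpow_mul (by positivity)]
  norm_num

theorem heisenberg_norm_triangle {n : ℕ} (x y : (Fin n → ℂ) × ℝ) :
    heisenbergNorm (heisenbergMul x y) ≤ heisenbergNorm x + heisenbergNorm y := by
  set A := ∑ j, Complex.normSq (x.1 j) with hA
  set B := ∑ j, Complex.normSq (y.1 j) with hB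
  have hA0 : 0 ≤ A := Finset.sum_nonneg fun _ _ => Complex.normSq_nonneg _
  have hB0 : 0 ≤ B := Finset.sum_nonneg fun _ _ => Complex.normSq_nonneg _
  set S : ℂ := ∑ j, x.1 j * (starRingEnd ℂ) (y.1 j) with hS
  have hx0 := hnorm_nonneg x
  have hy0 := hnorm_nonneg y
  -- Cauchy-Schwarz : |S| ≤ √A * √B
  have hCS : ‖S‖ ≤ Real.sqrt A * Real.sqrt B := by
    have h1 : ‖S‖ ≤ ∑ j, ‖x.1 j‖ * ‖y.1 j‖ := by
      refine le_trans (norm_sum_le _ _) (le_of_eq ?_)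
      refine Finset.sum_congr rfl fun j _ => ?_
      rw [norm_mul, Complex.norm_conj]
    refine h1.trans ?_
    have h2 : (∑ j, ‖x.1 j‖ * ‖y.1 j‖) ^ 2 ≤ A * B := by
      refine (Finset.sum_mul_sq_le_sq_mul_sq _ _ _).trans (le_of_eq ?_)
      rw [hA, hB]
      congr 1 <;> exact Finset.sum_congr rfl fun j _ => Complex.sq_norm _
    have h3 : 0 ≤ ∑ j, ‖x.1 j‖ * ‖y.1 j‖ :=
      Finset.sum_nonneg fun j _ => mul_nonneg (norm_nonneg _) (norm_nonneg _)
    calc (∑ j, ‖x.1 j‖ * ‖y.1 j‖)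
        = Real.sqrt ((∑ j, ‖x.1 j‖ * ‖y.1 j‖) ^ 2) :=
          (Real.sqrt_sq h3).symm
      _ ≤ Real.sqrt (A * B) := Real.sqrt_le_sqrt h2
      _ = Real.sqrt A * Real.sqrt B := Real.sqrt_mul hA0 _
  -- √A ≤ ρx
  have hsA : Real.sqrt A ≤ heisenbergNorm x := by
    refine le_of_pow_le_pow_left₀ two_ne_zero hx0 ?_
    rw [Real.sq_sqrt hA0, hnorm_sq, ← hA]
    calc A = Real.sqrt (A ^ 2) := by rw [Real.sqrt_sq hA0]
      _ ≤ Real.sqrt (A ^ 2 + x.2 ^ 2) := Real.sqrt_le_sqrt (by nlinarith [sq_nonneg x.2])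
  have hsB : Real.sqrt B ≤ heisenbergNorm y := by
    refine le_of_pow_le_pow_left₀ two_ne_zero hy0 ?_
    rw [Real.sq_sqrt hB0, hnorm_sq, ← hB]
    calc B = Real.sqrt (B ^ 2) := by rw [Real.sqrt_sq hB0]
      _ ≤ Real.sqrt (B ^ 2 + y.2 ^ 2) := Real.sqrt_le_sqrt (by nlinarith [sq_nonneg y.2])
  -- the sum of normSq for the product
  have hC : (∑ j, Complex.normSq ((heisenbergMul x y).1 j)) = A + B + 2 * S.re := by
    simp only [heisenbergMul, Pi.add_apply]
    rw [hA, hB, hS, Complex.re_sum, ← Finset.sum_add_distrib, Finset.mul_sum,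
      ← Finset.sum_add_distrib]
    exact Finset.sum_congr rfl fun j _ => Complex.normSq_add _ _
  -- square both sides
  refine le_of_pow_le_pow_left₀ two_ne_zero (add_nonneg hx0 hy0) ?_
  rw [hnorm_sq, hC]
  have hmul2 : (heisenbergMul x y).2 = x.2 + y.2 + 2 * S.im := rfl
  rw [hmul2]
  have habs : Real.sqrt ((A + B + 2 * S.re) ^ 2 + (x.2 + y.2 + 2 * S.im) ^ 2)
      = ‖(⟨A, x.2⟩ : ℂ) + (⟨B, y.2⟩ : ℂ) + 2 * S‖ := by
    rw [Complex.norm_def, Complex.normSq_apply]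
    simp only [Complex.add_re, Complex.add_im, Complex.mul_re, Complex.mul_im,
      Complex.re_ofNat, Complex.im_ofNat]
    ring_nf
  have habsx : ‖(⟨A, x.2⟩ : ℂ)‖ = Real.sqrt (A ^ 2 + x.2 ^ 2) := by
    rw [Complex.norm_def, Complex.normSq_apply]; ring_nf
  have habsy : ‖(⟨B, y.2⟩ : ℂ)‖ = Real.sqrt (B ^ 2 + y.2 ^ 2) := by
    rw [Complex.norm_def, Complex.normSq_apply]; ring_nf
  calc Real.sqrt ((A + B + 2 * S.re) ^ 2 + (x.2 + y.2 + 2 * S.im) ^ 2)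
      = ‖(⟨A, x.2⟩ : ℂ) + (⟨B, y.2⟩ : ℂ) + 2 * S‖ := habs
    _ ≤ ‖(⟨A, x.2⟩ : ℂ)‖ + ‖(⟨B, y.2⟩ : ℂ)‖ + ‖2 * S‖ :=
        le_trans (norm_add_le _ _) (add_le_add_left (norm_add_le _ _) _)
    _ = Real.sqrt (A ^ 2 + x.2 ^ 2) + Real.sqrt (B ^ 2 + y.2 ^ 2) + 2 * ‖S‖ := by
        rw [habsx, habsy, norm_mul]; norm_num
    _ ≤ heisenbergNorm x ^ 2 + heisenbergNorm y ^ 2 + 2 * (heisenbergNorm x * heisenbergNorm y) := by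
        have h1 : Real.sqrt (A ^ 2 + x.2 ^ 2) = heisenbergNorm x ^ 2 := (hnorm_sq x).symm
        have h2 : Real.sqrt (B ^ 2 + y.2 ^ 2) = heisenbergNorm y ^ 2 := (hnorm_sq y).symm
        rw [h1, h2]
        have : ‖S‖ ≤ heisenbergNorm x * heisenbergNorm y :=
          hCS.trans (mul_le_mul hsA hsB (Real.sqrt_nonneg _) hx0)
        linarith
    _ = (heisenbergNorm x + heisenbergNorm y) ^ 2 := by ring
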